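/- Let n ≥ 1, let R be a commutative ring, and let Γ be a weighted matrix digraph on vertices {0,1,…,n} given by a finite arc type E with source map s, target map t and weight map w as above. Fix a vertex j ∈ {1,…,n} and suppose that every arc of Γ with target j has source 0 (the vertex j is explicitly rooted). Let Γ' be the digraph with the same arc type E, the same target and weight maps, and source map s' defined by s'(e) = 0 if s(e) = j and s'(e) = s(e) otherwise (every out-arc of j is re-sourced to the root). Then the sum of arborescence weights of Γ equals the sum of arborescence weights of Γ'. -/

import Mathlib

attribute [local instance] Classical.propDecidable

/-- A directed cycle within the arc set `S`: a nonempty list of arcs `e₁,…,e_r` of `S` with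
`t eₖ = s eₖ₊₁` for `k < r` and `t e_r = s e₁`. -/
def HasCycleIn {V E : Type*} (s t : E → V) (S : Finset E) : Prop :=
  ∃ (l : List E) (hl : l ≠ []), (∀ e ∈ l, e ∈ S) ∧
    List.Chain' (fun e f => t e = s f) l ∧ t (l.getLast hl) = s (l.head hl)

/-- An arborescence of the matrix digraph on vertices `{0,…,n}`: a set `S` of `n` arcs such
that every vertex `i ∈ {1,…,n}` is the target of exactly one arc of `S` and `S` contains no
directed cycle. -/
def IsArbor {E : Type*} (n : ℕ) (s t : E → Fin (n + 1)) (S : Finset E) : Prop :=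
  S.card = n ∧ (∀ i : Fin (n + 1), i ≠ 0 → ∃! e, e ∈ S ∧ t e = i) ∧ ¬ HasCycleIn s t S

/-- In a cycle, every arc's source is the target of some arc of the cycle. -/
lemma cycle_pred {V E : Type*} {s t : E → V} {l : List E} (hl : l ≠ [])
    (hc : List.Chain' (fun e f => t e = s f) l)
    (hw : t (l.getLast hl) = s (l.head hl)) :
    ∀ f ∈ l, ∃ g ∈ l, t g = s f := by
  intro f hf
  obtain ⟨i, hi, rfl⟩ := List.mem_iff_getElem.mp hf
  rcases i with _ | i
  · refine ⟨l.getLast hl, List.getLast_mem hl, ?_⟩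
    rw [hw]
    congr 1
    exact (List.getElem_zero _).symm
  · refine ⟨l[i]'(by omega), List.getElem_mem _, ?_⟩
    have := List.isChain_iff_getElem.mp hc i (by omega)
    simpa [List.get_eq_getElem] using this

lemma cycle_sources_ne {n : ℕ} {E : Type*} {s t : E → Fin (n + 1)} {l : List E}
    (hl : l ≠ []) (hc : List.Chain' (fun e f => t e = s f) l)
    (hw : t (l.getLast hl) = s (l.head hl))
    (ht : ∀ e, t e ≠ 0) {j : Fin (n + 1)}
    (hrooted : ∀ e, t e = j → s e = 0) :
    ∀ f ∈ l, s f ≠ j := by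
  intro f hf hfj
  obtain ⟨g, hg, hgt⟩ := cycle_pred hl hc hw f hf
  have hsg : s g = 0 := hrooted g (hgt.trans hfj)
  obtain ⟨g', hg', hg't⟩ := cycle_pred hl hc hw g hg
  exact ht g' (hg't.trans hsg)

lemma hascycle_iff {n : ℕ} {E : Type*} (s t : E → Fin (n + 1))
    (ht : ∀ e, t e ≠ 0) {j : Fin (n + 1)}
    (hrooted : ∀ e, t e = j → s e = 0) (S : Finset E) :
    HasCycleIn s t S ↔ HasCycleIn (fun e => if s e = j then 0 else s e) t S := by
  constructor
  · rintro ⟨l, hl, hmem, hc, hw⟩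
    have key : ∀ f ∈ l, s f ≠ j := cycle_sources_ne hl hc hw ht hrooted
    refine ⟨l, hl, hmem, ?_, ?_⟩
    · rw [List.Chain', List.isChain_iff_getElem] at hc ⊢
      intro i hi
      have := hc i hi
      simp only [List.get_eq_getElem] at this ⊢
      rw [if_neg (key _ (List.getElem_mem _))]
      exact this
    · show t _ = if s (l.head hl) = j then 0 else s (l.head hl)
      rw [if_neg (key _ (List.head_mem hl))]
      exact hw
  · rintro ⟨l, hl, hmem, hc, hw⟩
    set s' : E → Fin (n + 1) := fun e => if s e = j then 0 else s e with hs'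
    have key : ∀ f ∈ l, s' f = s f := by
      intro f hf
      by_contra h
      have hfj : s f = j := by
        by_contra h'; exact h (if_neg h')
      have hf0 : s' f = 0 := if_pos hfj
      obtain ⟨g, hg, hgt⟩ := cycle_pred hl hc hw f hf
      exact ht g (hgt.trans hf0)
    refine ⟨l, hl, hmem, ?_, ?_⟩
    · rw [List.Chain', List.isChain_iff_getElem] at hc ⊢
      intro i hi
      have := hc i hi
      rw [← key _ (List.getElem_mem _)]
      exact this
    · rw [← key _ (List.head_mem hl)]
      exact hw

theorem sum_arborescence_weights_eq_of_isolation
    (n : ℕ) (hn : 1 ≤ n) (R : Type*) [CommRing R]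
    (E : Type*) [Fintype E] [DecidableEq E]
    (s t : E → Fin (n + 1)) (w : E → R)
    (ht : ∀ e, t e ≠ 0) (hs : ∀ e, s e ≠ t e)
    (j : Fin (n + 1)) (hj : j ≠ 0)
    (hrooted : ∀ e, t e = j → s e = 0) :
    (∑ S ∈ Finset.univ.filter (IsArbor n s t), ∏ e ∈ S, w e)
    = ∑ S ∈ Finset.univ.filter
        (IsArbor n (fun e => if s e = j then 0 else s e) t), ∏ e ∈ S, w e := by
  have : ∀ S : Finset E, IsArbor n s t S ↔
      IsArbor n (fun e => if s e = j then 0 else s e) t S := by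
    intro S
    unfold IsArbor
    rw [hascycle_iff s t ht hrooted S]
  apply Finset.sum_congr
  · ext S
    simp [Finset.mem_filter, this S]
  · intros; rfl
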